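/- Let L ∈ ℝ^{n×n} satisfy L i j ≤ 0 for all i ≠ j and L i i ≥ ∑_{j ≠ i} |L i j| for every i (in particular L i i ≥ 0), and let K = diag(κ₁, …, κ_n) with κ_i > 0 for all i. Then the matrix A = −L − K is Hurwitz: every complex eigenvalue μ of A satisfies Re μ < 0. (This is Lemma 1 of the paper: the district heating network system matrix A = −A_L − diag(κ_v), where A_L is a weighted flow Laplacian of the network graph and κ_v > 0 are heat-loss coefficients, is Hurwitz.) -/

import Mathlib

/-- **Lemma 1 of the paper.** If `L` has nonpositive off-diagonal
entries and each diagonal entry dominates the sum of the absolute values of the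
off-diagonal entries in its row (a weighted flow Laplacian), and `K` is a diagonal
matrix with strictly positive diagonal entries, then `A = -L - K` is Hurwitz:
every complex eigenvalue `μ` of `A` (root of `det (μ • I - A) = 0`) satisfies
`Re μ < 0`. -/
theorem laplacian_minus_damping_is_hurwitz
    {n : ℕ} (L : Matrix (Fin n) (Fin n) ℝ) (κ : Fin n → ℝ)
    (hoff : ∀ i j, i ≠ j → L i j ≤ 0)
    (hdom : ∀ i, ∑ j ∈ Finset.univ.erase i, |L i j| ≤ L i i)
    (hκ : ∀ i, 0 < κ i) :
    ∀ μ : ℂ,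
      (μ • (1 : Matrix (Fin n) (Fin n) ℂ) -
        (-L - Matrix.diagonal κ).map (Complex.ofReal ·)).det = 0 →
      μ.re < 0 := by
  intro μ hdet
  set A : Matrix (Fin n) (Fin n) ℂ := (-L - Matrix.diagonal κ).map (Complex.ofReal ·) with hA
  -- get an eigenvector
  obtain ⟨v, hv0, hv⟩ := (Matrix.exists_mulVec_eq_zero_iff).mpr hdet
  have heig : Module.End.HasEigenvalue (Matrix.toLin' A) μ := by
    apply Module.End.hasEigenvalue_of_hasEigenvector (x := v)
    refine ⟨?_, hv0⟩
    rw [Module.End.mem_eigenspace_iff]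
    have : A.mulVec v = μ • v := by
      have := hv
      rw [Matrix.sub_mulVec, sub_eq_zero] at this
      simpa [Matrix.smul_mulVec] using this.symm
    simpa [Matrix.toLin'_apply] using this
  obtain ⟨k, hk⟩ := eigenvalue_mem_ball heig
  rw [Metric.mem_closedBall] at hk
  have hAkk : A k k = Complex.ofReal (-(L k k + κ k)) := by
    simp [hA, Matrix.sub_apply, Matrix.diagonal_apply_eq]
    ring
  have hre : μ.re - (-(L k k + κ k)) ≤ dist μ (A k k) := by
    rw [hAkk]
    calc μ.re - (-(L k k + κ k)) = (μ - Complex.ofReal (-(L k k + κ k))).re := by simp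
    _ ≤ |(μ - Complex.ofReal (-(L k k + κ k))).re| := le_abs_self _
    _ ≤ ‖μ - Complex.ofReal (-(L k k + κ k))‖ := Complex.abs_re_le_norm _
    _ = dist μ (Complex.ofReal (-(L k k + κ k))) := (Complex.dist_eq _ _).symm
  have hsum : ∑ j ∈ Finset.univ.erase k, ‖A k j‖ = ∑ j ∈ Finset.univ.erase k, |L k j| := by
    refine Finset.sum_congr rfl fun j hj => ?_
    have hjk : j ≠ k := (Finset.mem_erase.mp hj).1
    have : A k j = Complex.ofReal (-(L k j)) := by
      simp [hA, Matrix.sub_apply, Matrix.diagonal_apply_ne' _ hjk]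
    rw [this]
    simp [Real.norm_eq_abs, abs_neg]
  have := hdom k
  have hκk := hκ k
  have h1 : μ.re ≤ -(L k k + κ k) + ∑ j ∈ Finset.univ.erase k, |L k j| := by
    have := hre.trans (hk.trans_eq hsum)
    linarith
  linarith
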